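/- Let p be a prime with p ≡ 3 (mod 4) and S ⊆ ℤ/pℤ a nonempty subset with f_S(x) = ∏_{a∈S}(x−a). Let |X_S(𝔽_p)| denote the number of affine points (x,y) ∈ (ℤ/pℤ)² with y² = f_S(x). If |S| is even then |X_S(𝔽_p)| ≡ 2 (mod 4), and if |S| is odd then |X_S(𝔽_p)| ≡ 3 (mod 4). -/

import Mathlib

open Finset

-- product of nonzero elements of ZMod p is -1
lemma aux_prod_nonzero (p : ℕ) [Fact p.Prime] : ∏ x ∈ univ.erase (0 : ZMod p), x = -1 := by
  have h1 : ∏ x : (ZMod p)ˣ, (x : ZMod p) = -1 := by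
    simp_rw [← Units.coeHom_apply]
    rw [← map_prod (Units.coeHom (ZMod p))]
    simp_rw [FiniteField.prod_univ_units_id_eq_neg_one, Units.coeHom_apply, Units.val_neg,
      Units.val_one]
  rw [← h1]
  refine (prod_bij (fun (a : (ZMod p)ˣ) _ => (a : ZMod p)) ?_ ?_ ?_ ?_).symm
  · intro a _; simp [Units.ne_zero]
  · intro a _ b _ h; exact Units.ext h
  · intro b hb
    rcases mem_erase.mp hb with ⟨hb0, -⟩
    exact ⟨Units.mk0 b hb0, mem_univ _, rfl⟩
  · intro a _; rfl

-- for b ∈ S : ∏_{x ∉ S} (x-b) * ∏_{c ∈ S.erase b} (c-b) = -1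
lemma aux_wilson (p : ℕ) [Fact p.Prime] (S : Finset (ZMod p)) {b : ZMod p} (hb : b ∈ S) :
    (∏ x ∈ Sᶜ, (x - b)) * ∏ c ∈ S.erase b, (c - b) = -1 := by
  rw [← Finset.prod_union]
  · have hU : Sᶜ ∪ S.erase b = univ.erase b := by
      ext x
      simp only [mem_union, mem_compl, mem_erase, mem_univ, and_true]
      constructor
      · rintro (h | ⟨hxb, _⟩)
        · rintro rfl; exact h hb
        · exact hxb
      · intro hxb
        by_cases hxS : x ∈ S
        · exact Or.inr ⟨hxb, hxS⟩
        · exact Or.inl hxS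
    rw [hU, ← aux_prod_nonzero p]
    refine prod_nbij' (fun x => x - b) (fun t => t + b) ?_ ?_ ?_ ?_ ?_
    · intro x hx
      simp only [mem_erase, mem_univ, and_true] at hx ⊢
      exact sub_ne_zero.mpr hx
    · intro t ht
      simp only [mem_erase, mem_univ, and_true] at ht ⊢
      intro h; exact ht (by linear_combination h)
    · intro x _; ring
    · intro t _; ring
    · intro x _; rfl
  · rw [Finset.disjoint_left]
    intro x hx hx'
    exact (mem_compl.mp hx) (mem_of_mem_erase hx')

-- χ of the "discriminant" product
lemma aux_chiD (p : ℕ) [Fact p.Prime] (hp : p % 4 = 3) (S : Finset (ZMod p)) :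
    quadraticChar (ZMod p) (∏ q ∈ S.offDiag, (q.2 - q.1)) =
      (-1) ^ ((S.offDiag.filter (fun q => q.1.val < q.2.val)).card) ∧
    (S.offDiag.filter (fun q => q.1.val < q.2.val)).card * 2 = S.offDiag.card := by
  have hval : ∀ q : ZMod p × ZMod p, q ∈ S.offDiag → ¬ q.1.val < q.2.val →
      (q.2, q.1) ∈ S.offDiag.filter (fun q => q.1.val < q.2.val) := by
    intro q hq hlt
    rw [mem_offDiag] at hq
    have hne : q.1.val ≠ q.2.val := fun h => hq.2.2 (ZMod.val_injective p h)
    rw [mem_filter, mem_offDiag]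
    exact ⟨⟨hq.2.1, hq.1, fun h => hq.2.2 h.symm⟩, by dsimp only; omega⟩
  have hcard : (S.offDiag.filter (fun q => ¬ q.1.val < q.2.val)).card
      = (S.offDiag.filter (fun q => q.1.val < q.2.val)).card := by
    refine Finset.card_nbij' (fun q => (q.2, q.1)) (fun q => (q.2, q.1)) ?_ ?_ ?_ ?_
    · intro q hq
      rw [mem_coe, mem_filter] at hq
      exact hval q hq.1 hq.2
    · intro q hq
      rw [mem_coe, mem_filter, mem_offDiag] at hq
      rw [mem_coe, mem_filter, mem_offDiag]
      refine ⟨⟨hq.1.2.1, hq.1.1, fun h => hq.1.2.2 h.symm⟩, by dsimp only; omega⟩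
    · intro q _; rfl
    · intro q _; rfl
  constructor
  · have hneg1 : quadraticChar (ZMod p) (-1) = -1 := by
      apply quadraticChar_neg_one_iff_not_isSquare.mpr
      rw [ZMod.exists_sq_eq_neg_one_iff]
      simp [hp]
    rw [map_prod]
    rw [← Finset.prod_filter_mul_prod_filter_not S.offDiag (fun q => q.1.val < q.2.val)]
    have h2 : ∏ q ∈ S.offDiag.filter (fun q => ¬ q.1.val < q.2.val),
        quadraticChar (ZMod p) (q.2 - q.1)
        = ∏ q ∈ S.offDiag.filter (fun q => q.1.val < q.2.val),
        quadraticChar (ZMod p) (q.1 - q.2) := by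
      refine prod_nbij' (fun q => (q.2, q.1)) (fun q => (q.2, q.1)) ?_ ?_ ?_ ?_ ?_
      · intro q hq
        rw [mem_filter] at hq
        exact hval q hq.1 hq.2
      · intro q hq
        rw [mem_filter, mem_offDiag] at hq
        rw [mem_filter, mem_offDiag]
        refine ⟨⟨hq.1.2.1, hq.1.1, fun h => hq.1.2.2 h.symm⟩, by dsimp only; omega⟩
      · intro q _; rfl
      · intro q _; rfl
      · intro q _; rfl
    rw [h2, ← Finset.prod_mul_distrib]
    have h3 : ∀ q ∈ S.offDiag.filter (fun q => q.1.val < q.2.val),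
        quadraticChar (ZMod p) (q.2 - q.1) * quadraticChar (ZMod p) (q.1 - q.2) = -1 := by
      intro q hq
      rw [mem_filter, mem_offDiag] at hq
      have hne : q.2 - q.1 ≠ 0 := sub_ne_zero.mpr (fun h => hq.1.2.2 h.symm)
      have : q.1 - q.2 = -1 * (q.2 - q.1) := by ring
      rw [this, map_mul, hneg1]
      have := quadraticChar_sq_one (F := ZMod p) hne
      nlinarith [this]
    rw [Finset.prod_congr rfl h3, Finset.prod_const]
  · have := Finset.card_filter_add_card_filter_not (s := S.offDiag)
      (p := fun q => q.1.val < q.2.val)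
    omega

theorem stmt7 (p : ℕ) [Fact p.Prime] (hp : p % 4 = 3) (S : Finset (ZMod p)) (hS : S.Nonempty) :
    (Even S.card →
      ((Finset.univ : Finset (ZMod p × ZMod p)).filter
        (fun P => P.2 ^ 2 = ∏ b ∈ S, (P.1 - b))).card % 4 = 2) ∧
    (Odd S.card →
      ((Finset.univ : Finset (ZMod p × ZMod p)).filter
        (fun P => P.2 ^ 2 = ∏ b ∈ S, (P.1 - b))).card % 4 = 3) := by
  classical
  have hchar2 : ringChar (ZMod p) ≠ 2 := by
    rw [ZMod.ringChar_zmod_n]; omega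
  set χ := quadraticChar (ZMod p) with hχdef
  set f : ZMod p → ZMod p := fun x => ∏ b ∈ S, (x - b) with hfdef
  set N := ((Finset.univ : Finset (ZMod p × ZMod p)).filter
      (fun P => P.2 ^ 2 = ∏ b ∈ S, (P.1 - b))).card with hNdef
  set C := Sᶜ with hCdef
  set L := (S.offDiag.filter (fun q => q.1.val < q.2.val)).card with hLdef
  set B := (C.filter (fun x => χ (f x) = -1)).card with hBdef
  set A := (C.filter (fun x => χ (f x) = 1)).card with hAdef
  -- N as a sum of fiber counts
  have hNsum : N = ∑ x : ZMod p, (univ.filter (fun y : ZMod p => y ^ 2 = f x)).card := by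
    rw [hNdef, Finset.card_filter, ← Finset.univ_product_univ, Finset.sum_product]
    refine Finset.sum_congr rfl (fun x _ => ?_)
    rw [Finset.card_filter]
  have hfiber : ∀ a : ZMod p, ((univ.filter (fun y : ZMod p => y ^ 2 = a)).card : ℤ)
      = χ a + 1 := by
    intro a
    have h := quadraticChar_card_sqrts hchar2 a
    rw [← h]
    congr 1
    rw [Set.toFinset_setOf]
  have hfC : ∀ x ∈ C, f x ≠ 0 := by
    intro x hx
    apply Finset.prod_ne_zero_iff.mpr
    intro b hb
    exact sub_ne_zero.mpr (fun h => (Finset.mem_compl.mp hx) (h ▸ hb))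
  -- N = p + ∑_{x ∈ C} χ (f x)
  have hNZ : (N : ℤ) = (∑ x ∈ C, χ (f x)) + p := by
    have h1 : (N : ℤ) = ∑ x : ZMod p, (χ (f x) + 1) := by
      rw [hNsum, Nat.cast_sum]
      exact Finset.sum_congr rfl (fun x _ => hfiber (f x))
    rw [h1, Finset.sum_add_distrib, Finset.sum_const, card_univ, ZMod.card]
    congr 1
    · symm
      apply Finset.sum_subset (Finset.subset_univ _)
      intro x _ hx
      have hxS : x ∈ S := by
        by_contra hxS
        exact hx (Finset.mem_compl.mpr hxS)
      have hz : f x = 0 := Finset.prod_eq_zero hxS (sub_self x)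
      rw [hz]
      exact quadraticChar_zero
    · simp
  have hdi : ∀ x ∈ C, χ (f x) = 1 ∨ χ (f x) = -1 := fun x hx =>
    quadraticChar_dichotomy (hfC x hx)
  have hsplit : C.filter (fun x => ¬ χ (f x) = 1) = C.filter (fun x => χ (f x) = -1) := by
    apply Finset.filter_congr
    intro x hx
    rcases hdi x hx with h | h <;> simp [h]
  have hsum : ∑ x ∈ C, χ (f x) = (A : ℤ) - B := by
    rw [← Finset.sum_filter_add_sum_filter_not C (fun x => χ (f x) = 1), hsplit]
    rw [Finset.sum_congr rfl (fun x hx => (Finset.mem_filter.mp hx).2)]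
    rw [Finset.sum_congr (rfl : C.filter (fun x => χ (f x) = -1) = _)
      (fun x hx => (Finset.mem_filter.mp hx).2)]
    rw [Finset.sum_const, Finset.sum_const]
    simp only [nsmul_eq_mul, mul_one, mul_neg_one]
    rw [← hAdef, ← hBdef]
    ring
  have hsle : S.card ≤ p := by
    have := Finset.card_le_univ S
    rwa [ZMod.card] at this
  have hcardAB : A + B = p - S.card := by
    have h1 := Finset.card_filter_add_card_filter_not (s := C)
      (p := fun x => χ (f x) = 1)
    rw [hsplit] at h1
    have h2 : C.card = p - S.card := by
      simp [hCdef, Finset.card_compl, ZMod.card]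
    omega
  have hprodB : ∏ x ∈ C, χ (f x) = (-1) ^ B := by
    rw [← Finset.prod_filter_mul_prod_filter_not C (fun x => χ (f x) = 1), hsplit]
    rw [Finset.prod_congr rfl (fun x hx => (Finset.mem_filter.mp hx).2)]
    rw [Finset.prod_congr (rfl : C.filter (fun x => χ (f x) = -1) = _)
      (fun x hx => (Finset.mem_filter.mp hx).2)]
    rw [Finset.prod_const_one, one_mul, Finset.prod_const]
  -- the key product identity
  have hkey : (∏ x ∈ C, f x) * (∏ q ∈ S.offDiag, (q.2 - q.1)) = (-1) ^ S.card := by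
    have hD : ∏ q ∈ S.offDiag, (q.2 - q.1) = ∏ b ∈ S, ∏ c ∈ S.erase b, (c - b) := by
      rw [show S.offDiag = (S ×ˢ S).filter (fun a => a.1 ≠ a.2) by ext q; simp [mem_offDiag, and_assoc], Finset.prod_filter, Finset.prod_product]
      refine Finset.prod_congr rfl (fun b _ => ?_)
      rw [← Finset.prod_filter]
      refine Finset.prod_congr ?_ (fun c _ => rfl)
      ext c
      simp only [Finset.mem_filter, Finset.mem_erase]
      tauto
    have hC : ∏ x ∈ C, f x = ∏ b ∈ S, ∏ x ∈ C, (x - b) := by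
      rw [hfdef]
      exact Finset.prod_comm
    rw [hD, hC, ← Finset.prod_mul_distrib]
    rw [Finset.prod_congr rfl (fun b hb => aux_wilson p S hb)]
    rw [Finset.prod_const]
  have hchiD := (aux_chiD p hp S).1
  have hLcard := (aux_chiD p hp S).2
  -- apply χ to the key identity
  have hkey2 : ((-1 : ℤ)) ^ B * (-1) ^ L = (-1) ^ S.card := by
    have h := congrArg χ hkey
    rw [map_mul, map_pow, map_prod] at h
    rw [← hprodB]
    have hneg1 : χ (-1) = -1 := by
      apply quadraticChar_neg_one_iff_not_isSquare.mpr
      rw [ZMod.exists_sq_eq_neg_one_iff]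
      simp [hp]
    rw [hneg1] at h
    rw [← hchiD, ← h]
  have hEven : (B + L + S.card) % 2 = 0 := by
    apply Nat.even_iff.mp
    have h1 : ((-1 : ℤ)) ^ (B + L + S.card) = 1 := by
      rw [pow_add, pow_add, hkey2, ← pow_add, ← two_mul, pow_mul]
      norm_num
    exact (neg_one_pow_eq_one_iff_even (by norm_num : (-1 : ℤ) ≠ 1)).mp h1
  -- linear arithmetic setup
  have hNat : N + S.card + 2 * B = 2 * p := by
    rw [hsum] at hNZ
    omega
  obtain ⟨t, ht⟩ : ∃ t, S.card * S.card = t := ⟨_, rfl⟩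
  have hoff : S.offDiag.card = t - S.card := by rw [Finset.offDiag_card, ht]
  have hts : S.card ≤ t := by
    rw [← ht]
    exact Nat.le_mul_of_pos_left _ (Finset.card_pos.mpr hS)
  rw [hoff] at hLcard
  have hspos : 0 < S.card := Finset.card_pos.mpr hS
  constructor
  · rintro ⟨k, hk⟩
    have hsq : t = 4 * (k * k) := by rw [← ht, hk]; ring
    obtain ⟨m, hm⟩ : ∃ m, k * k = m := ⟨_, rfl⟩
    rw [hm] at hsq
    omega
  · rintro ⟨k, hk⟩
    have hsq : t = 4 * (k * k + k) + 1 := by rw [← ht, hk]; ring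
    obtain ⟨m, hm⟩ : ∃ m, k * k + k = m := ⟨_, rfl⟩
    rw [hm] at hsq
    omega
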